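/- Let σ be a polyhedron in ℝ^n, ω ∈ σ, and v ∈ ℝ^n. Then there exists ε₀ > 0 such that for all 0 < ε < ε₀: σ ∩ (σ' + εv) ≠ ∅ is equivalent to link_ω(σ) ∩ (link_ω(σ') + v) ≠ ∅, whenever σ' is a polyhedron containing ω. More precisely: for polyhedra σ, σ' containing ω, ω ∈ lim_{ε→0^+} σ ∩ (σ' + εv) if and only if link_ω(σ) ∩ (link_ω(σ') + v) ≠ ∅. -/
import Mathlib


open Pointwise RealInnerProductSpace

/-- A polyhedron in `ℝ^n`: a finite intersection of closed half-spaces. -/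
def IsPolyhedron {n : ℕ} (σ : Set (EuclideanSpace ℝ (Fin n))) : Prop :=
  ∃ (k : ℕ) (a : Fin k → EuclideanSpace ℝ (Fin n)) (b : Fin k → ℝ),
    σ = {x | ∀ i, ⟪a i, x⟫ ≤ b i}

/-- The link of a set `S ⊆ ℝ^n` at a point `ω`. -/
def linkSet {n : ℕ} (ω : EuclideanSpace ℝ (Fin n)) (S : Set (EuclideanSpace ℝ (Fin n))) :
    Set (EuclideanSpace ℝ (Fin n)) :=
  {u | ∃ δ : ℝ, 0 < δ ∧ ∀ ε : ℝ, 0 < ε → ε < δ → ω + ε • u ∈ S}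

lemma mem_link_poly {n k : ℕ} (a : Fin k → EuclideanSpace ℝ (Fin n)) (b : Fin k → ℝ)
    (ω : EuclideanSpace ℝ (Fin n)) (hω : ∀ i, ⟪a i, ω⟫ ≤ b i)
    (u : EuclideanSpace ℝ (Fin n)) :
    u ∈ linkSet ω {x | ∀ i, ⟪a i, x⟫ ≤ b i} ↔ ∀ i, ⟪a i, ω⟫ = b i → ⟪a i, u⟫ ≤ 0 := by
  constructor
  · rintro ⟨δ, hδ, h⟩ i hi
    have := h (δ/2) (by linarith) (by linarith) i
    simp only [inner_add_right, real_inner_smul_right] at this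
    nlinarith
  · intro h
    have hg : ∀ i : Fin k, 0 < (if 0 < ⟪a i, u⟫ then (b i - ⟪a i, ω⟫) / ⟪a i, u⟫ else 1) := by
      intro i
      split_ifs with hi
      · apply div_pos _ hi
        rcases lt_or_eq_of_le (hω i) with h' | h'
        · linarith
        · exact absurd (h i h') (not_le.2 hi)
      · norm_num
    obtain ⟨δ, hδ, hle⟩ : ∃ δ : ℝ, 0 < δ ∧ ∀ i : Fin k,
        δ ≤ (if 0 < ⟪a i, u⟫ then (b i - ⟪a i, ω⟫) / ⟪a i, u⟫ else 1) := by
      rcases isEmpty_or_nonempty (Fin k) with hk | hk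
      · exact ⟨1, one_pos, fun i => (hk.false i).elim⟩
      · refine ⟨Finset.univ.inf' Finset.univ_nonempty _, ?_, fun i => Finset.inf'_le _ (Finset.mem_univ i)⟩
        rw [Finset.lt_inf'_iff]
        exact fun i _ => hg i
    refine ⟨δ, hδ, fun ε hε hεδ i => ?_⟩
    simp only [Set.mem_setOf_eq, inner_add_right, real_inner_smul_right]
    by_cases hi : 0 < ⟪a i, u⟫
    · have h1 := hle i
      rw [if_pos hi] at h1
      have : δ * ⟪a i, u⟫ ≤ b i - ⟪a i, ω⟫ := by
        rw [← le_div_iff₀ hi]; exact h1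
      nlinarith
    · push_neg at hi
      nlinarith [hω i]

/-- For polyhedra `σ, σ'` containing a point `ω` and a vector `v`,
`ω ∈ lim_{ε→0⁺} σ ∩ (σ' + εv)` if and only if `link_ω(σ) ∩ (link_ω(σ') + v) ≠ ∅`. -/
theorem limit_point_iff_link_inter_nonempty {n : ℕ}
    (σ σ' : Set (EuclideanSpace ℝ (Fin n))) (hσ : IsPolyhedron σ) (hσ' : IsPolyhedron σ')
    (ω : EuclideanSpace ℝ (Fin n)) (hωσ : ω ∈ σ) (hωσ' : ω ∈ σ')
    (v : EuclideanSpace ℝ (Fin n)) :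
    (∀ δ : ℝ, 0 < δ → ∃ ε : ℝ, 0 < ε ∧
        ∃ p ∈ σ ∩ (σ' + ({ε • v} : Set (EuclideanSpace ℝ (Fin n)))), dist p ω < δ)
      ↔ (linkSet ω σ ∩ (linkSet ω σ' + ({v} : Set (EuclideanSpace ℝ (Fin n))))).Nonempty := by

  obtain ⟨k, a, b, rfl⟩ := hσ
  obtain ⟨k', a', b', rfl⟩ := hσ'
  constructor
  · intro H
    obtain ⟨ε, hε, p, ⟨hp1, hp2⟩, -⟩ := H 1 one_pos
    obtain ⟨q, hq, y, hy, hqy⟩ := Set.mem_add.1 hp2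
    rw [Set.mem_singleton_iff] at hy; subst hy
    set u : EuclideanSpace ℝ (Fin n) := ε⁻¹ • (p - ω) with hu
    refine ⟨u, ?_, ?_⟩
    · rw [mem_link_poly a b ω hωσ]
      intro i hi
      have hpi := hp1 i
      have : ⟪a i, u⟫ = ε⁻¹ * (⟪a i, p⟫ - ⟪a i, ω⟫) := by
        rw [hu, real_inner_smul_right, inner_sub_right]
      rw [this, hi]
      apply mul_nonpos_of_nonneg_of_nonpos (by positivity)
      linarith
    · rw [Set.add_singleton]
      refine ⟨u - v, ?_, by simp⟩
      rw [mem_link_poly a' b' ω hωσ']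
      intro j hj
      have hqj := hq j
      have hpq : q = p - ε • v := by
        rw [← hqy]; abel
      have : ⟪a' j, u - v⟫ = ε⁻¹ * (⟪a' j, q⟫ - ⟪a' j, ω⟫) := by
        rw [hpq, hu, inner_sub_right, real_inner_smul_right, inner_sub_right,
          inner_sub_right, real_inner_smul_right]
        field_simp
        ring
      rw [this]
      apply mul_nonpos_of_nonneg_of_nonpos (by positivity)
      linarith [hj]
  · rintro ⟨u, hu1, hu2⟩
    rw [Set.add_singleton] at hu2
    obtain ⟨w, hw, hwv⟩ := hu2
    rw [mem_link_poly a b ω hωσ] at hu1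
    rw [mem_link_poly a' b' ω hωσ'] at hw
    rw [← mem_link_poly a b ω hωσ] at hu1
    rw [← mem_link_poly a' b' ω hωσ'] at hw
    obtain ⟨δ₁, hδ₁, h₁⟩ := hu1
    obtain ⟨δ₂, hδ₂, h₂⟩ := hw
    intro δ hδ
    set ε : ℝ := min (min δ₁ δ₂) (δ / (‖u‖ + 1)) / 2 with hε
    have hεpos : 0 < ε := by
      apply div_pos _ two_pos
      apply lt_min (lt_min hδ₁ hδ₂)
      positivity
    have hε1 : ε < δ₁ := by
      have := min_le_left (min δ₁ δ₂) (δ / (‖u‖ + 1))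
      have := min_le_left δ₁ δ₂
      simp only [hε]; linarith
    have hε2 : ε < δ₂ := by
      have := min_le_left (min δ₁ δ₂) (δ / (‖u‖ + 1))
      have := min_le_right δ₁ δ₂
      simp only [hε]; linarith
    refine ⟨ε, hεpos, ω + ε • u, ⟨h₁ ε hεpos hε1, ?_⟩, ?_⟩
    · rw [Set.add_singleton]
      refine ⟨ω + ε • w, h₂ ε hεpos hε2, ?_⟩
      rw [← hwv]; simp [smul_add]; abel
    · rw [dist_eq_norm]
      have : ω + ε • u - ω = ε • u := by abel
      rw [this, norm_smul, Real.norm_eq_abs, abs_of_pos hεpos]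
      have hεle : ε ≤ (δ / (‖u‖ + 1)) / 2 := by
        have := min_le_right (min δ₁ δ₂) (δ / (‖u‖ + 1))
        simp only [hε]; linarith
      have h1 : ε * ‖u‖ ≤ (δ / (‖u‖ + 1)) / 2 * ‖u‖ :=
        mul_le_mul_of_nonneg_right hεle (norm_nonneg u)
      have h2 : (δ / (‖u‖ + 1)) / 2 * ‖u‖ < δ := by
        rw [div_div, div_mul_eq_mul_div, div_lt_iff₀ (by positivity)]
        nlinarith [norm_nonneg u]
      linarith
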